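/- Let Θ, Υ ∈ ℝ^{n×n} and Γ ∈ ℝ^{s×s} be diagonal matrices with diagonal entries θ_i ∈ (0,2), α_i > 0, γ_i > 0 respectively, let β > 0, let U be a real r×s matrix, set L' = Uᵀ U (an s×s positive semidefinite matrix), and assume β·γ_i < 1/λ_max(L') for every diagonal entry γ_i of Γ. Define the block matrices Q = fromBlocks with diagonal blocks Υ⁻¹, Γ⁻¹, (1/β) I_r and the single off-diagonal block −Uᵀ in the (2,3) position (all other off-diagonal blocks zero), and M = fromBlocks with diagonal blocks Θ, I_s, I_r and the single off-diagonal block −Γ Uᵀ in the (2,3) position (all other off-diagonal blocks zero). Then M is invertible, H := Q M⁻¹ is symmetric positive definite, D := Qᵀ + Q − Mᵀ H M is symmetric positive definite, and H − D is positive semidefinite. -/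

import Mathlib

open Matrix

section Aux
variable {m p : Type*} [Fintype m] [Fintype p] [DecidableEq m] [DecidableEq p]

lemma aux_smul_one_sub_psd {A : Matrix m m ℝ} (hA : A.IsHermitian) :
    ((⨆ j, hA.eigenvalues j) • (1 : Matrix m m ℝ) - A).PosSemidef := by
  set l := ⨆ j, hA.eigenvalues j with hl
  have key : l • (1 : Matrix m m ℝ) - A =
      (hA.eigenvectorUnitary : Matrix m m ℝ) *
        diagonal (fun i => l - hA.eigenvalues i) *
        (star (hA.eigenvectorUnitary : Matrix m m ℝ)) := by
    have hd : diagonal (fun i => l - hA.eigenvalues i)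
        = l • (1 : Matrix m m ℝ) - diagonal (RCLike.ofReal ∘ hA.eigenvalues) := by
      ext i j
      rcases eq_or_ne i j with h | h <;>
        simp [diagonal_apply, h, Matrix.one_apply, Function.comp]
    rw [hd, Matrix.mul_sub, Matrix.sub_mul, Matrix.mul_smul, mul_one,
      Matrix.smul_mul, (Matrix.mem_unitaryGroup_iff).mp hA.eigenvectorUnitary.2,
      ← Unitary.conjStarAlgAut_apply (S := ℝ), ← hA.spectral_theorem]
  rw [key]
  exact (posSemidef_diagonal_iff.mpr fun i =>
    sub_nonneg.mpr (le_ciSup (Set.Finite.bddAbove (Set.finite_range _)) i)).mul_mul_conjTranspose_same _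

lemma aux_rayleigh {A : Matrix m m ℝ} (hA : A.IsHermitian) (v : m → ℝ) :
    v ⬝ᵥ (A *ᵥ v) ≤ (⨆ j, hA.eigenvalues j) * (v ⬝ᵥ v) := by
  have h := (aux_smul_one_sub_psd hA).dotProduct_mulVec_nonneg v
  simp only [sub_mulVec, dotProduct_sub, smul_mulVec, one_mulVec,
    dotProduct_smul, smul_eq_mul, star_trivial] at h
  linarith

lemma aux_comp_ne_zero {x : m ⊕ p → ℝ} (hx : x ≠ 0) :
    x ∘ Sum.inl ≠ 0 ∨ x ∘ Sum.inr ≠ 0 := by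
  by_contra h
  push_neg at h
  apply hx
  funext i
  cases i with
  | inl i => exact congrFun h.1 i
  | inr i => exact congrFun h.2 i

lemma aux_quadform_blocks (A : Matrix m m ℝ) (D : Matrix p p ℝ) (x : m ⊕ p → ℝ) :
    star x ⬝ᵥ (fromBlocks A 0 0 D *ᵥ x)
      = star (x ∘ Sum.inl) ⬝ᵥ (A *ᵥ (x ∘ Sum.inl))
        + star (x ∘ Sum.inr) ⬝ᵥ (D *ᵥ (x ∘ Sum.inr)) := by
  rw [fromBlocks_mulVec, dotProduct_block]
  simp

lemma aux_posdef_blocks {A : Matrix m m ℝ} {D : Matrix p p ℝ}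
    (hA : A.PosDef) (hD : D.PosDef) : (fromBlocks A 0 0 D).PosDef := by
  refine .of_dotProduct_mulVec_pos (hA.1.fromBlocks (by simp) hD.1) fun x hx => ?_
  rw [aux_quadform_blocks]
  rcases aux_comp_ne_zero hx with h | h
  · exact add_pos_of_pos_of_nonneg (hA.dotProduct_mulVec_pos h) (hD.posSemidef.dotProduct_mulVec_nonneg _)
  · exact add_pos_of_nonneg_of_pos (hA.posSemidef.dotProduct_mulVec_nonneg _) (hD.dotProduct_mulVec_pos h)

lemma aux_possemidef_blocks {A : Matrix m m ℝ} {D : Matrix p p ℝ}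
    (hA : A.PosSemidef) (hD : D.PosSemidef) : (fromBlocks A 0 0 D).PosSemidef := by
  refine .of_dotProduct_mulVec_nonneg (hA.1.fromBlocks (by simp) hD.1) fun x => ?_
  rw [aux_quadform_blocks]
  exact add_nonneg (hA.dotProduct_mulVec_nonneg _) (hD.dotProduct_mulVec_nonneg _)

lemma aux_quad (γ : p → ℝ) (U : Matrix m p ℝ) (x : m → ℝ) :
    x ⬝ᵥ ((U * diagonal γ * Uᵀ) *ᵥ x)
      = ∑ i, γ i * ((Uᵀ *ᵥ x) i) ^ 2 := by
  rw [← Matrix.mulVec_mulVec, ← Matrix.mulVec_mulVec, Matrix.dotProduct_mulVec,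
    ← Matrix.mulVec_transpose]
  simp only [dotProduct, mulVec_diagonal]
  exact Finset.sum_congr rfl fun i _ => by ring

lemma aux_UγUt_hermitian (γ : p → ℝ) (U : Matrix m p ℝ) :
    (U * diagonal γ * Uᵀ).IsHermitian := by
  have : (U * diagonal γ * Uᵀ)ᵀ = U * diagonal γ * Uᵀ := by
    rw [Matrix.transpose_mul, Matrix.transpose_mul, transpose_transpose,
      diagonal_transpose, Matrix.mul_assoc]
  simpa [Matrix.IsHermitian, conjTranspose_eq_transpose_of_trivial] using this

end Aux

lemma aux_corner_posdef {s r : ℕ} (γ : Fin s → ℝ) (β : ℝ) (hγ : ∀ i, 0 < γ i) (hβ : 0 < β)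
    (U : Matrix (Fin r) (Fin s) ℝ) (hL' : (Uᵀ * U).IsHermitian)
    (hstep : ∀ i, β * γ i < 1 / (⨆ j, hL'.eigenvalues j)) :
    ((1 / β) • (1 : Matrix (Fin r) (Fin r) ℝ) - U * diagonal γ * Uᵀ).PosDef := by
  set l := ⨆ j, hL'.eigenvalues j with hl
  have hherm : ((1 / β) • (1 : Matrix (Fin r) (Fin r) ℝ) - U * diagonal γ * Uᵀ).IsHermitian := by
    have h2 := aux_UγUt_hermitian γ U
    simp [Matrix.IsHermitian, conjTranspose_sub, conjTranspose_smul, conjTranspose_one,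
      star_trivial, h2.eq, Matrix.mul_assoc]
  refine .of_dotProduct_mulVec_pos hherm fun x hx => ?_
  have hxx : 0 < x ⬝ᵥ x := by
    have := Matrix.dotProduct_star_self_pos_iff (v := x) |>.mpr hx
    simpa using this
  have hquad : star x ⬝ᵥ (((1 / β) • (1 : Matrix (Fin r) (Fin r) ℝ) - U * diagonal γ * Uᵀ) *ᵥ x)
      = (1 / β) * (x ⬝ᵥ x) - ∑ i, γ i * ((Uᵀ *ᵥ x) i) ^ 2 := by
    rw [star_trivial, sub_mulVec, dotProduct_sub, aux_quad]
    simp [smul_mulVec]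
  rw [hquad]
  set y := Uᵀ *ᵥ x with hy
  by_cases hy0 : y = 0
  · simp only [hy0]
    simp only [Pi.zero_apply, ne_eq, OfNat.ofNat_ne_zero, not_false_eq_true, zero_pow, mul_zero,
      Finset.sum_const_zero, sub_zero]
    exact mul_pos (by positivity) hxx
  · obtain ⟨j0, hj0⟩ := Function.ne_iff.mp hy0
    simp only [Pi.zero_apply] at hj0
    have hl_pos : 0 < l := by
      have h1 : 0 < 1 / l := lt_trans (mul_pos hβ (hγ j0)) (hstep j0)
      by_contra h
      push_neg at h
      exact absurd h1 (not_lt.mpr (one_div_nonpos.mpr h))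
    -- bound: y ⬝ᵥ y ≤ l * (x ⬝ᵥ x)
    have hyy_pos : 0 < y ⬝ᵥ y := by
      have := Matrix.dotProduct_star_self_pos_iff (v := y) |>.mpr hy0
      simpa using this
    have hUy : (U *ᵥ y) ⬝ᵥ (U *ᵥ y) ≤ l * (y ⬝ᵥ y) := by
      have h := aux_rayleigh hL' y
      have heq : y ⬝ᵥ ((Uᵀ * U) *ᵥ y) = (U *ᵥ y) ⬝ᵥ (U *ᵥ y) := by
        rw [← Matrix.mulVec_mulVec, Matrix.dotProduct_mulVec, Matrix.vecMul_transpose]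
      rw [heq] at h
      exact h
    have hcs : (y ⬝ᵥ y) ^ 2 ≤ ((U *ᵥ y) ⬝ᵥ (U *ᵥ y)) * (x ⬝ᵥ x) := by
      have h1 : y ⬝ᵥ y = (U *ᵥ y) ⬝ᵥ x := by
        nth_rewrite 2 [hy]
        rw [Matrix.dotProduct_mulVec, Matrix.vecMul_transpose]
      calc (y ⬝ᵥ y) ^ 2 = ((U *ᵥ y) ⬝ᵥ x) ^ 2 := by rw [h1]
        _ ≤ ((U *ᵥ y) ⬝ᵥ (U *ᵥ y)) * (x ⬝ᵥ x) := by
            simpa [dotProduct, pow_two, sq] using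
              Finset.sum_mul_sq_le_sq_mul_sq Finset.univ (U *ᵥ y) x
    have hkey : y ⬝ᵥ y ≤ l * (x ⬝ᵥ x) := by
      nlinarith [hUy, hcs, hyy_pos, hxx]
    have hsum : ∑ i, γ i * (y i) ^ 2 < (1 / (β * l)) * (y ⬝ᵥ y) := by
      have hγlt : ∀ i, γ i < 1 / (β * l) := by
        intro i
        rw [lt_div_iff₀ (by positivity)]
        nlinarith [mul_lt_mul_of_pos_right (hstep i) hl_pos,
          one_div_mul_cancel (ne_of_gt hl_pos)]
      have hstrict : ∑ i, γ i * (y i) ^ 2 < ∑ i, (1 / (β * l)) * (y i) ^ 2 := by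
        refine Finset.sum_lt_sum (fun i _ => ?_) ⟨j0, Finset.mem_univ _, ?_⟩
        · exact mul_le_mul_of_nonneg_right (hγlt i).le (sq_nonneg _)
        · exact mul_lt_mul_of_pos_right (hγlt j0) (by positivity)
      calc ∑ i, γ i * (y i) ^ 2 < ∑ i, (1 / (β * l)) * (y i) ^ 2 := hstrict
        _ = (1 / (β * l)) * (y ⬝ᵥ y) := by
            rw [dotProduct, Finset.mul_sum]
            exact Finset.sum_congr rfl fun i _ => by ring
    have hfin : (1 / (β * l)) * (y ⬝ᵥ y) ≤ (1 / β) * (x ⬝ᵥ x) := by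
      calc (1 / (β * l)) * (y ⬝ᵥ y) ≤ (1 / (β * l)) * (l * (x ⬝ᵥ x)) :=
            mul_le_mul_of_nonneg_left hkey (by positivity)
        _ = (1 / β) * (x ⬝ᵥ x) := by field_simp
    linarith
theorem stmt2 {n s r : ℕ}
    (θ α : Fin n → ℝ) (γ : Fin s → ℝ) (β : ℝ)
    (hθ : ∀ i, θ i ∈ Set.Ioo (0 : ℝ) 2) (hα : ∀ i, 0 < α i) (hγ : ∀ i, 0 < γ i)
    (hβ : 0 < β)
    (U : Matrix (Fin r) (Fin s) ℝ)
    (hL' : (Uᵀ * U).IsHermitian)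
    (hstep : ∀ i, β * γ i < 1 / (⨆ j, hL'.eigenvalues j))
    (Θ : Matrix (Fin n) (Fin n) ℝ) (hΘ : Θ = Matrix.diagonal θ)
    (Υ : Matrix (Fin n) (Fin n) ℝ) (hΥ : Υ = Matrix.diagonal α)
    (Γ : Matrix (Fin s) (Fin s) ℝ) (hΓ : Γ = Matrix.diagonal γ)
    (Q M : Matrix (Fin n ⊕ (Fin s ⊕ Fin r)) (Fin n ⊕ (Fin s ⊕ Fin r)) ℝ)
    (hQ : Q = Matrix.fromBlocks Υ⁻¹ 0 0
      (Matrix.fromBlocks Γ⁻¹ (-Uᵀ) 0 ((1 / β) • (1 : Matrix (Fin r) (Fin r) ℝ))))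
    (hM : M = Matrix.fromBlocks Θ 0 0
      (Matrix.fromBlocks 1 (-(Γ * Uᵀ)) 0 1)) :
    IsUnit M.det ∧ (Q * M⁻¹).PosDef ∧
      (Qᵀ + Q - Mᵀ * (Q * M⁻¹) * M).PosDef ∧
      ((Q * M⁻¹) - (Qᵀ + Q - Mᵀ * (Q * M⁻¹) * M)).PosSemidef := by
  have hθ0 : ∀ i, 0 < θ i := fun i => (hθ i).1
  have hθ2 : ∀ i, θ i < 2 := fun i => (hθ i).2
  have hαne : ∀ i, α i ≠ 0 := fun i => (hα i).ne'
  have hθne : ∀ i, θ i ≠ 0 := fun i => (hθ0 i).ne'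
  have hγne : ∀ i, γ i ≠ 0 := fun i => (hγ i).ne'
  subst hΘ hΥ hΓ hQ hM
  have hαinv : (diagonal α)⁻¹ = diagonal fun i => (α i)⁻¹ := by
    apply Matrix.inv_eq_right_inv
    rw [diagonal_mul_diagonal]
    have : (fun i => α i * (α i)⁻¹) = fun _ => (1:ℝ) := funext fun i => mul_inv_cancel₀ (hαne i)
    rw [this, diagonal_one]
  have hγinv : (diagonal γ)⁻¹ = diagonal fun i => (γ i)⁻¹ := by
    apply Matrix.inv_eq_right_inv
    rw [diagonal_mul_diagonal]
    have : (fun i => γ i * (γ i)⁻¹) = fun _ => (1:ℝ) := funext fun i => mul_inv_cancel₀ (hγne i)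
    rw [this, diagonal_one]
  have hθθ : (fun i => θ i * (θ i)⁻¹) = fun _ => (1:ℝ) := funext fun i => mul_inv_cancel₀ (hθne i)
  have hγγ' : diagonal (fun i => (γ i)⁻¹) * diagonal γ = 1 := by
    rw [diagonal_mul_diagonal]
    have : (fun i => (γ i)⁻¹ * γ i) = fun _ => (1:ℝ) := funext fun i => inv_mul_cancel₀ (hγne i)
    rw [this, diagonal_one]
  -- inverse of M
  have hMinv_right :
      (fromBlocks (diagonal θ) 0 0
          (fromBlocks (1 : Matrix (Fin s) (Fin s) ℝ) (-(diagonal γ * Uᵀ)) 0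
            (1 : Matrix (Fin r) (Fin r) ℝ)) :
          Matrix (Fin n ⊕ (Fin s ⊕ Fin r)) (Fin n ⊕ (Fin s ⊕ Fin r)) ℝ) *
        (fromBlocks (diagonal (fun i => (θ i)⁻¹)) 0 0
          (fromBlocks (1 : Matrix (Fin s) (Fin s) ℝ) (diagonal γ * Uᵀ) 0
            (1 : Matrix (Fin r) (Fin r) ℝ))) = 1 := by
    rw [fromBlocks_multiply, fromBlocks_multiply]
    simp [diagonal_mul_diagonal, hθθ, fromBlocks_one]
  have hdet : IsUnit (fromBlocks (diagonal θ) 0 0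
      (fromBlocks 1 (-(diagonal γ * Uᵀ)) 0 1) : Matrix (Fin n ⊕ (Fin s ⊕ Fin r)) _ ℝ).det :=
    Matrix.isUnit_det_of_right_inverse hMinv_right
  have hMinv := Matrix.inv_eq_right_inv hMinv_right
  -- H = Q * M⁻¹
  have hH : (fromBlocks ((diagonal α)⁻¹) 0 0
        (fromBlocks ((diagonal γ)⁻¹) (-Uᵀ) 0 ((1 / β) • (1 : Matrix (Fin r) (Fin r) ℝ)))) *
      (fromBlocks (diagonal θ) 0 0 (fromBlocks 1 (-(diagonal γ * Uᵀ)) 0 1))⁻¹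
      = fromBlocks (diagonal fun i => (α i)⁻¹ * (θ i)⁻¹) 0 0
          (fromBlocks (diagonal fun i => (γ i)⁻¹) 0 0
            ((1 / β) • (1 : Matrix (Fin r) (Fin r) ℝ))) := by
    rw [hMinv, hαinv, hγinv, fromBlocks_multiply, fromBlocks_multiply,
      diagonal_mul_diagonal]
    simp [← Matrix.mul_assoc, hγγ']
  -- D computation helpers
  have e1 : diagonal θ * diagonal (fun i => (α i)⁻¹ * (θ i)⁻¹) * diagonal θ
      = diagonal (fun i => θ i * (α i)⁻¹) := by
    rw [diagonal_mul_diagonal, diagonal_mul_diagonal]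
    refine congrArg diagonal (funext fun i => ?_)
    calc θ i * ((α i)⁻¹ * (θ i)⁻¹) * θ i = (θ i * (θ i)⁻¹) * ((α i)⁻¹ * θ i) := by ring
      _ = θ i * (α i)⁻¹ := by rw [mul_inv_cancel₀ (hθne i)]; ring
  have e2 : diagonal (fun i => (α i)⁻¹) + diagonal (fun i => (α i)⁻¹)
        - diagonal (fun i => θ i * (α i)⁻¹)
      = diagonal (fun i : Fin n => (2 - θ i) * (α i)⁻¹) := by
    rw [diagonal_add, diagonal_sub]
    exact congrArg diagonal (funext fun i => by ring)
  have hD : (fromBlocks ((diagonal α)⁻¹) 0 0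
          (fromBlocks ((diagonal γ)⁻¹) (-Uᵀ) 0 ((1 / β) • (1 : Matrix (Fin r) (Fin r) ℝ))))ᵀ
        + (fromBlocks ((diagonal α)⁻¹) 0 0
          (fromBlocks ((diagonal γ)⁻¹) (-Uᵀ) 0 ((1 / β) • (1 : Matrix (Fin r) (Fin r) ℝ))))
        - (fromBlocks (diagonal θ) 0 0 (fromBlocks 1 (-(diagonal γ * Uᵀ)) 0 1))ᵀ *
            (fromBlocks (diagonal fun i => (α i)⁻¹ * (θ i)⁻¹) 0 0
              (fromBlocks (diagonal fun i => (γ i)⁻¹) 0 0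
                ((1 / β) • (1 : Matrix (Fin r) (Fin r) ℝ)))) *
            (fromBlocks (diagonal θ) 0 0 (fromBlocks 1 (-(diagonal γ * Uᵀ)) 0 1))
      = fromBlocks (diagonal fun i => (2 - θ i) * (α i)⁻¹) 0 0
          (fromBlocks (diagonal fun i => (γ i)⁻¹) 0 0
            ((1 / β) • (1 : Matrix (Fin r) (Fin r) ℝ) - U * diagonal γ * Uᵀ)) := by
    rw [hαinv, hγinv]
    simp only [fromBlocks_transpose, fromBlocks_multiply, fromBlocks_add,
      transpose_zero, transpose_neg, transpose_mul,
      transpose_transpose, diagonal_transpose, transpose_one, transpose_smul,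
      Matrix.mul_zero, Matrix.zero_mul, Matrix.mul_one, Matrix.one_mul,
      add_zero, zero_add, Matrix.neg_mul, Matrix.mul_neg, neg_neg, neg_zero,
      Matrix.smul_mul, Matrix.mul_smul, sub_eq_add_neg, fromBlocks_neg]
    have hγγ : diagonal γ * diagonal (fun i => (γ i)⁻¹) = 1 := by
      rw [diagonal_mul_diagonal]
      have : (fun i => γ i * (γ i)⁻¹) = fun _ => (1:ℝ) := funext fun i => mul_inv_cancel₀ (hγne i)
      rw [this, diagonal_one]
    rw [fromBlocks_inj, fromBlocks_inj]
    refine ⟨?_, rfl, rfl, ?_, ?_, ?_, ?_⟩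
    · rw [e1, ← sub_eq_add_neg, e2]
      exact congrArg diagonal (funext fun i => by ring)
    · abel
    · rw [smul_zero, add_zero, ← Matrix.mul_assoc, hγγ', Matrix.one_mul, neg_neg]
      exact neg_add_cancel _
    · rw [Matrix.mul_assoc U (diagonal γ) (diagonal fun i => (γ i)⁻¹), hγγ, Matrix.mul_one]
      exact neg_add_cancel U
    · rw [Matrix.mul_assoc (U * diagonal γ) (diagonal fun i => (γ i)⁻¹) (diagonal γ * Uᵀ),
        ← Matrix.mul_assoc (diagonal fun i => (γ i)⁻¹) (diagonal γ) Uᵀ, hγγ', Matrix.one_mul]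
      abel
  -- assembly
  have hUγU_psd : (U * diagonal γ * Uᵀ).PosSemidef :=
    Matrix.PosSemidef.of_dotProduct_mulVec_nonneg (aux_UγUt_hermitian γ U) fun x => by
      rw [star_trivial, aux_quad]
      exact Finset.sum_nonneg fun i _ => mul_nonneg (hγ i).le (sq_nonneg _)
  have hsmul1 : ((1 / β) • (1 : Matrix (Fin r) (Fin r) ℝ)) = diagonal (fun _ => 1 / β) := by
    rw [← diagonal_one, ← diagonal_smul]
    exact congrArg diagonal (funext fun i => by simp)
  refine ⟨hdet, ?_, ?_, ?_⟩
  · rw [hH]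
    exact aux_posdef_blocks
      (Matrix.PosDef.diagonal fun i => mul_pos (inv_pos.mpr (hα i)) (inv_pos.mpr (hθ0 i)))
      (aux_posdef_blocks
        (Matrix.PosDef.diagonal fun i => inv_pos.mpr (hγ i))
        (hsmul1 ▸ Matrix.PosDef.diagonal fun _ => by positivity))
  · rw [hH, hD]
    exact aux_posdef_blocks
      (Matrix.PosDef.diagonal fun i =>
        mul_pos (by linarith [hθ2 i]) (inv_pos.mpr (hα i)))
      (aux_posdef_blocks
        (Matrix.PosDef.diagonal fun i => inv_pos.mpr (hγ i))
        (aux_corner_posdef γ β hγ hβ U hL' hstep))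
  · rw [hH, hD]
    have hHD : fromBlocks (diagonal fun i => (α i)⁻¹ * (θ i)⁻¹) 0 0
          (fromBlocks (diagonal fun i => (γ i)⁻¹) 0 0
            ((1 / β) • (1 : Matrix (Fin r) (Fin r) ℝ)))
        - fromBlocks (diagonal fun i => (2 - θ i) * (α i)⁻¹) 0 0
          (fromBlocks (diagonal fun i => (γ i)⁻¹) 0 0
            ((1 / β) • (1 : Matrix (Fin r) (Fin r) ℝ) - U * diagonal γ * Uᵀ))
        = fromBlocks (diagonal fun i => (α i)⁻¹ * (θ i)⁻¹ - (2 - θ i) * (α i)⁻¹) 0 0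
          (fromBlocks 0 0 0 (U * diagonal γ * Uᵀ)) := by
      simp only [sub_eq_add_neg, fromBlocks_neg, fromBlocks_add, neg_zero, add_zero, neg_neg,
        zero_add]
      rw [fromBlocks_inj, fromBlocks_inj]
      refine ⟨?_, rfl, rfl, ?_, rfl, rfl, ?_⟩
      · rw [← sub_eq_add_neg, diagonal_sub]
        exact congrArg diagonal (funext fun i => by ring)
      · exact add_neg_cancel _
      · abel
    rw [hHD]
    refine aux_possemidef_blocks (posSemidef_diagonal_iff.mpr fun i => ?_)
      (aux_possemidef_blocks Matrix.PosSemidef.zero hUγU_psd)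
    have hkey : (α i)⁻¹ * (θ i)⁻¹ - (2 - θ i) * (α i)⁻¹
        = (θ i - 1) ^ 2 * ((α i)⁻¹ * (θ i)⁻¹) := by
      have ht := mul_inv_cancel₀ (hθne i)
      calc (α i)⁻¹ * (θ i)⁻¹ - (2 - θ i) * (α i)⁻¹
          = (α i)⁻¹ * (θ i)⁻¹ - (2 - θ i) * (θ i * (θ i)⁻¹) * (α i)⁻¹ := by rw [ht]; ring
        _ = (θ i - 1) ^ 2 * ((α i)⁻¹ * (θ i)⁻¹) := by ring
    rw [hkey]
    have : 0 < (α i)⁻¹ * (θ i)⁻¹ := mul_pos (inv_pos.mpr (hα i)) (inv_pos.mpr (hθ0 i))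
    positivity
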